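/- Let f ∈ F₁(a,b) with a ≥ 0, let P be a probability measure on a measurable space (Ω,M), and let φ₁,…,φ_k : Ω → ℝ be measurable with φ_i ∈ L¹(P) and, for each i, suppose there exist c_i⁺, c_i⁻ > 0 and ν_i⁺, ν_i⁻ ∈ ℝ such that E_P[(f*(c_i⁺φ_i − ν_i⁺))⁺] < ∞ and E_P[(f*(−c_i⁻φ_i − ν_i⁻))⁺] < ∞. Then for every η > 0 there exist real numbers M_{i,η}⁻, M_{i,η}⁺, i = 1,…,k, such that E_Q[φ_i] ∈ [−M_{i,η}⁻, M_{i,η}⁺] for all i and all probability measures Q on (Ω,M) with D_f(Q,P) ≤ η. -/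

import Mathlib

open MeasureTheory Filter Set
open scoped ENNReal NNReal Classical
open scoped Topology

/-- The positive part of an extended real number, as an element of `ℝ≥0∞`. -/
noncomputable def erealPos (x : EReal) : ℝ≥0∞ := if x = ⊤ then ⊤ else ENNReal.ofReal x.toReal

/-- Extended expectation of an `EReal`-valued function, with the convention `∞ - ∞ = ∞`. -/
noncomputable def feexp {Ω : Type*} [MeasurableSpace Ω] (P : Measure Ω) (g : Ω → EReal) : EReal :=
  if ∫⁻ x, erealPos (g x) ∂P = ⊤ then ⊤
  else ((∫⁻ x, erealPos (g x) ∂P).toReal : EReal) - ((∫⁻ x, erealPos (-(g x)) ∂P : ℝ≥0∞) : EReal)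

/-- The extension of a convex function `f : (a,b) → ℝ` to a convex, lower semicontinuous
function `ℝ → (-∞,∞]`, taking the limiting values at finite endpoints and `∞` outside `[a,b]`. -/
noncomputable def fExt (a b : EReal) (f : ℝ → ℝ) (x : ℝ) : EReal :=
  if a < (x : EReal) ∧ (x : EReal) < b then (f x : EReal)
  else if (x : EReal) = a then limsup (fun t : ℝ => (f t : EReal)) (nhdsWithin x (Ioi x))
  else if (x : EReal) = b then limsup (fun t : ℝ => (f t : EReal)) (nhdsWithin x (Iio x))
  else ⊤

/-- The `f`-divergence `D_f(Q,P) = E_P[f(dQ/dP)]` for `Q ≪ P`, and `∞` otherwise. -/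
noncomputable def fDivg {Ω : Type*} [MeasurableSpace Ω] (a b : EReal) (f : ℝ → ℝ)
    (Q P : Measure Ω) : EReal :=
  if Q ≪ P then feexp P (fun x => fExt a b f ((Q.rnDeriv P) x).toReal) else ⊤

/-- The Legendre transform `f*(y) = sup_{x ∈ (a,b)} {x y - f x}`. -/
noncomputable def legT (a b : EReal) (f : ℝ → ℝ) (y : ℝ) : EReal :=
  ⨆ x : {t : ℝ // a < (t : EReal) ∧ (t : EReal) < b}, ((x.1 * y - f x.1 : ℝ) : EReal)


lemma erealPos_coe (r : ℝ) : erealPos (r : EReal) = ENNReal.ofReal r := by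
  simp [erealPos]

lemma erealPos_mono {x y : EReal} (h : x ≤ y) : erealPos x ≤ erealPos y := by
  unfold erealPos
  by_cases hy : y = ⊤
  · simp [hy]
  · have hx : x ≠ ⊤ := fun hx => hy (top_le_iff.mp (hx ▸ h))
    rw [if_neg hx, if_neg hy]
    rcases eq_or_ne x ⊥ with hxb | hxb
    · simp [hxb]
    · exact ENNReal.ofReal_le_ofReal (EReal.toReal_le_toReal h hxb hy)

lemma measurable_erealPos : Measurable erealPos := by
  unfold erealPos
  exact Measurable.ite (measurableSet_eq) measurable_const
    (measurable_ereal_toReal.ennreal_ofReal)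

lemma ofReal_le_erealPos_add {r : ℝ} {u v : EReal} (h : (r : EReal) ≤ u + v)
    (hu : u ≠ ⊥) (hv : v ≠ ⊥) : ENNReal.ofReal r ≤ erealPos u + erealPos v := by
  rcases eq_or_ne u ⊤ with h1 | h1
  · simp [erealPos, h1]
  rcases eq_or_ne v ⊤ with h2 | h2
  · simp [erealPos, h2]
  have hu' : ((u.toReal : ℝ) : EReal) = u := EReal.coe_toReal h1 hu
  have hv' : ((v.toReal : ℝ) : EReal) = v := EReal.coe_toReal h2 hv
  rw [← hu', ← hv', ← EReal.coe_add, EReal.coe_le_coe_iff] at h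
  calc ENNReal.ofReal r ≤ ENNReal.ofReal (u.toReal + v.toReal) := ENNReal.ofReal_le_ofReal h
    _ ≤ ENNReal.ofReal u.toReal + ENNReal.ofReal v.toReal := ENNReal.ofReal_add_le
    _ = erealPos u + erealPos v := by rw [erealPos, erealPos, if_neg h1, if_neg h2]

lemma coe_le_fExt {a b : EReal} (ha1 : a < 1) (hb1 : (1 : EReal) < b)
    {f g : ℝ → ℝ} (hg : Continuous g)
    (hgf : ∀ t : ℝ, a < (t : EReal) → (t : EReal) < b → g t ≤ f t)
    (ρ : ℝ) : ((g ρ : ℝ) : EReal) ≤ fExt a b f ρ := by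
  unfold fExt
  by_cases h1 : a < (ρ : EReal) ∧ (ρ : EReal) < b
  · rw [if_pos h1]
    exact_mod_cast hgf ρ h1.1 h1.2
  rw [if_neg h1]
  by_cases h2 : (ρ : EReal) = a
  · rw [if_pos h2]
    have hρ1 : ρ < 1 := by
      have : (ρ : EReal) < ((1 : ℝ) : EReal) := by rw [h2]; exact_mod_cast ha1
      exact_mod_cast this
    have hev : ∀ᶠ t in 𝓝[>] ρ, ((g t : ℝ) : EReal) ≤ ((f t : ℝ) : EReal) := by
      filter_upwards [Ioo_mem_nhdsGT_of_mem (α := ℝ) ⟨le_refl ρ, hρ1⟩] with t ht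
      have h1t : a < (t : EReal) := by rw [← h2]; exact_mod_cast ht.1
      have h2t : (t : EReal) < b := by
        refine lt_trans ?_ hb1
        exact_mod_cast ht.2
      exact_mod_cast hgf t h1t h2t
    have hlim : Tendsto (fun t : ℝ => ((g t : ℝ) : EReal)) (𝓝[>] ρ) (𝓝 ((g ρ : ℝ) : EReal)) :=
      ((continuous_coe_real_ereal.comp hg).tendsto ρ).mono_left nhdsWithin_le_nhds
    calc ((g ρ : ℝ) : EReal) = limsup (fun t : ℝ => ((g t : ℝ) : EReal)) (𝓝[>] ρ) :=
          hlim.limsup_eq.symm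
      _ ≤ limsup (fun t : ℝ => ((f t : ℝ) : EReal)) (𝓝[>] ρ) := limsup_le_limsup hev
  rw [if_neg h2]
  by_cases h3 : (ρ : EReal) = b
  · rw [if_pos h3]
    have hρ1 : 1 < ρ := by
      have : ((1 : ℝ) : EReal) < (ρ : EReal) := by rw [h3]; exact_mod_cast hb1
      exact_mod_cast this
    have hev : ∀ᶠ t in 𝓝[<] ρ, ((g t : ℝ) : EReal) ≤ ((f t : ℝ) : EReal) := by
      filter_upwards [Ioo_mem_nhdsLT_of_mem (α := ℝ) ⟨hρ1, le_refl ρ⟩] with t ht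
      have h1t : a < (t : EReal) := by
        refine lt_trans ha1 ?_
        exact_mod_cast ht.1
      have h2t : (t : EReal) < b := by rw [← h3]; exact_mod_cast ht.2
      exact_mod_cast hgf t h1t h2t
    have hlim : Tendsto (fun t : ℝ => ((g t : ℝ) : EReal)) (𝓝[<] ρ) (𝓝 ((g ρ : ℝ) : EReal)) :=
      ((continuous_coe_real_ereal.comp hg).tendsto ρ).mono_left nhdsWithin_le_nhds
    calc ((g ρ : ℝ) : EReal) = limsup (fun t : ℝ => ((g t : ℝ) : EReal)) (𝓝[<] ρ) :=
          hlim.limsup_eq.symm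
      _ ≤ limsup (fun t : ℝ => ((f t : ℝ) : EReal)) (𝓝[<] ρ) := limsup_le_limsup hev
  rw [if_neg h3]
  exact le_top

lemma le_legT {a b : EReal} (ha1 : a < 1) (hb1 : (1 : EReal) < b) {f : ℝ → ℝ}
    (hf1 : f 1 = 0) (y : ℝ) : (y : EReal) ≤ legT a b f y := by
  have h1 : a < ((1 : ℝ) : EReal) ∧ ((1 : ℝ) : EReal) < b :=
    ⟨by exact_mod_cast ha1, by exact_mod_cast hb1⟩
  have := le_iSup (fun x : {t : ℝ // a < (t : EReal) ∧ (t : EReal) < b} =>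
    ((x.1 * y - f x.1 : ℝ) : EReal)) ⟨1, h1⟩
  simpa [hf1, legT] using this

lemma legT_ne_bot {a b : EReal} (ha1 : a < 1) (hb1 : (1 : EReal) < b) {f : ℝ → ℝ}
    (hf1 : f 1 = 0) (y : ℝ) : legT a b f y ≠ ⊥ := by
  intro h
  simpa [h] using le_legT ha1 hb1 hf1 y

lemma young {a b : EReal} (ha1 : a < 1) (hb1 : (1 : EReal) < b) {f : ℝ → ℝ}
    (hf1 : f 1 = 0) {C : ℝ}
    (hline : ∀ t : ℝ, a < (t : EReal) → (t : EReal) < b → -C * (t + 1) ≤ f t)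
    (ρ y : ℝ) : ((ρ * y : ℝ) : EReal) ≤ fExt a b f ρ + legT a b f y := by
  have hfb : ((-C * (ρ + 1) : ℝ) : EReal) ≤ fExt a b f ρ :=
    coe_le_fExt ha1 hb1 (by continuity) hline ρ
  have hfbot : fExt a b f ρ ≠ ⊥ := fun h =>
    (EReal.coe_ne_bot _) (le_bot_iff.mp (h ▸ hfb))
  rcases eq_or_ne (legT a b f y) ⊤ with hT | hT
  · rw [hT, EReal.add_top_of_ne_bot hfbot]; exact le_top
  · have hLbot := legT_ne_bot ha1 hb1 hf1 y
    set L := (legT a b f y).toReal with hL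
    have hLe : ((L : ℝ) : EReal) = legT a b f y := EReal.coe_toReal hT hLbot
    have hgf : ∀ t : ℝ, a < (t : EReal) → (t : EReal) < b → t * y - L ≤ f t := by
      intro t h1 h2
      have h3 : ((t * y - f t : ℝ) : EReal) ≤ ((L : ℝ) : EReal) := by
        rw [hLe]
        exact le_iSup (fun x : {t : ℝ // a < (t : EReal) ∧ (t : EReal) < b} =>
          ((x.1 * y - f x.1 : ℝ) : EReal)) ⟨t, h1, h2⟩
      have := EReal.coe_le_coe_iff.mp h3
      linarith
    have h4 : ((ρ * y - L : ℝ) : EReal) ≤ fExt a b f ρ :=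
      coe_le_fExt ha1 hb1 (g := fun t => t * y - L) (by continuity) hgf ρ
    calc ((ρ * y : ℝ) : EReal) = ((ρ * y - L : ℝ) : EReal) + ((L : ℝ) : EReal) := by
          rw [← EReal.coe_add]; norm_num
      _ ≤ fExt a b f ρ + legT a b f y := by
          rw [hLe]; exact add_le_add h4 le_rfl

lemma measurable_fExt {a b : EReal} (ha : 0 ≤ a) (ha1 : a < 1) (hb1 : (1 : EReal) < b)
    {f : ℝ → ℝ} (hf : ConvexOn ℝ {t : ℝ | a < (t : EReal) ∧ (t : EReal) < b} f) :
    Measurable (fExt a b f) := by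
  classical
  set s : Set ℝ := {t : ℝ | a < (t : EReal) ∧ (t : EReal) < b} with hs
  have hmem : ∀ x : ℝ, x ∈ s ↔ (a < (x : EReal) ∧ (x : EReal) < b) := fun x => Iff.rfl
  have hso : IsOpen s := by
    have : s = ((↑) : ℝ → EReal) ⁻¹' (Ioo a b) := rfl
    rw [this]; exact isOpen_Ioo.preimage continuous_coe_real_ereal
  have hsm : MeasurableSet s := hso.measurableSet
  have hfc : ContinuousOn f s := hf.continuousOn hso
  have hf'm : Measurable (s.piecewise f fun _ => (0 : ℝ)) :=
    ContinuousOn.measurable_piecewise hfc continuousOn_const hsm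
  have habot : a ≠ ⊥ := fun h => by rw [h] at ha; simp at ha
  have hatop : a ≠ ⊤ := ne_top_of_lt ha1
  have haR : ((a.toReal : ℝ) : EReal) = a := EReal.coe_toReal hatop habot
  have hbbot : b ≠ ⊥ := ne_bot_of_gt hb1
  set F0 : ℝ → EReal := fun x => if x ∈ s then ((s.piecewise f fun _ => (0 : ℝ)) x : EReal) else ⊤
    with hF0
  have hF0m : Measurable F0 :=
    Measurable.ite hsm (continuous_coe_real_ereal.measurable.comp hf'm) measurable_const
  set F1 : ℝ → EReal := fun x => if x = a.toReal
      then limsup (fun t : ℝ => (f t : EReal)) (𝓝[>] a.toReal) else F0 x with hF1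
  have hF1m : Measurable F1 := Measurable.ite measurableSet_eq measurable_const hF0m
  have hax : ∀ x : ℝ, ((x : EReal) = a ↔ x = a.toReal) := fun x =>
    ⟨fun h => by rw [← EReal.toReal_coe x, h], fun h => by rw [h, haR]⟩
  have hF0s : ∀ x : ℝ, x ∈ s → F0 x = (f x : EReal) := by
    intro x hxs
    simp only [hF0]
    rw [if_pos hxs, Set.piecewise_eq_of_mem _ _ _ hxs]
  have hF0n : ∀ x : ℝ, x ∉ s → F0 x = ⊤ := by
    intro x hxs
    simp only [hF0]
    rw [if_neg hxs]
  have hfExts : ∀ x : ℝ, x ∈ s → fExt a b f x = (f x : EReal) := by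
    intro x hxs
    rw [fExt, if_pos ((hmem x).mp hxs)]
  have hfExta : ∀ x : ℝ, (x : EReal) = a →
      fExt a b f x = limsup (fun t : ℝ => (f t : EReal)) (𝓝[>] a.toReal) := by
    intro x hxa
    have hxs : ¬(a < (x : EReal) ∧ (x : EReal) < b) := fun h => absurd h.1 (by rw [hxa]; exact lt_irrefl a)
    have hxval : x = a.toReal := (hax x).mp hxa
    rw [fExt, if_neg hxs, if_pos hxa, hxval]
  have hmain : ∀ x : ℝ, x ∉ s → (x : EReal) ≠ a → (x : EReal) ≠ b → fExt a b f x = ⊤ := by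
    intro x h1 h2 h3
    rw [fExt, if_neg (fun h => h1 ((hmem x).mpr h)), if_neg h2, if_neg h3]
  rcases eq_or_ne b ⊤ with hbt | hbt
  · have heq : fExt a b f = F1 := by
      funext x
      simp only [hF1]
      by_cases hxa : x = a.toReal
      · rw [if_pos hxa, hfExta x ((hax x).mpr hxa)]
      · rw [if_neg hxa]
        by_cases hxs : x ∈ s
        · rw [hfExts x hxs, hF0s x hxs]
        · have hxb : (x : EReal) ≠ b := by rw [hbt]; exact EReal.coe_ne_top x
          rw [hmain x hxs (fun h => hxa ((hax x).mp h)) hxb, hF0n x hxs]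
    rw [heq]; exact hF1m
  · have hbR : ((b.toReal : ℝ) : EReal) = b := EReal.coe_toReal hbt hbbot
    have hbx : ∀ x : ℝ, ((x : EReal) = b ↔ x = b.toReal) := fun x =>
      ⟨fun h => by rw [← EReal.toReal_coe x, h], fun h => by rw [h, hbR]⟩
    have hfExtb : ∀ x : ℝ, (x : EReal) = b →
        fExt a b f x = limsup (fun t : ℝ => (f t : EReal)) (𝓝[<] b.toReal) := by
      intro x hxb
      have hxs : ¬(a < (x : EReal) ∧ (x : EReal) < b) := fun h => absurd h.2 (by rw [hxb]; exact lt_irrefl b)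
      have hxa : (x : EReal) ≠ a := by rw [hxb]; exact (ha1.trans hb1).ne'
      have hxval : x = b.toReal := (hbx x).mp hxb
      rw [fExt, if_neg hxs, if_neg hxa, if_pos hxb, hxval]
    set F2 : ℝ → EReal := fun x => if x = b.toReal
        then limsup (fun t : ℝ => (f t : EReal)) (𝓝[<] b.toReal) else F1 x with hF2
    have hF2m : Measurable F2 := Measurable.ite measurableSet_eq measurable_const hF1m
    have heq : fExt a b f = F2 := by
      funext x
      simp only [hF2, hF1]
      by_cases hxb : x = b.toReal
      · rw [if_pos hxb, hfExtb x ((hbx x).mpr hxb)]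
      · rw [if_neg hxb]
        by_cases hxa : x = a.toReal
        · rw [if_pos hxa, hfExta x ((hax x).mpr hxa)]
        · rw [if_neg hxa]
          by_cases hxs : x ∈ s
          · rw [hfExts x hxs, hF0s x hxs]
          · rw [hmain x hxs (fun h => hxa ((hax x).mp h)) (fun h => hxb ((hbx x).mp h)),
              hF0n x hxs]
    rw [heq]; exact hF2m

/-- **Uniform bounds on means over f-divergence neighborhoods.** Under the two-sided
integrability conditions on each `φ i`, for every `η > 0` there are real constants
`M⁻ i, M⁺ i` such that `E_Q[φ i] ∈ [-M⁻ i, M⁺ i]` for all probability measures `Q` with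
`D_f(Q,P) ≤ η`. -/
theorem mean_bounds_on_fDiv_ball {Ω : Type*} [MeasurableSpace Ω]
    {a b : EReal} (ha : 0 ≤ a) (ha1 : a < 1) (hb1 : (1 : EReal) < b)
    {f : ℝ → ℝ} (hf : ConvexOn ℝ {t : ℝ | a < (t : EReal) ∧ (t : EReal) < b} f)
    (hf1 : f 1 = 0)
    (P : Measure Ω) [IsProbabilityMeasure P]
    {k : ℕ} {φ : Fin k → Ω → ℝ}
    (hφm : ∀ i, Measurable (φ i)) (hφ1 : ∀ i, Integrable (φ i) P)
    (hintp : ∀ i, ∃ cp > (0 : ℝ), ∃ νp : ℝ, ∫⁻ x, erealPos (legT a b f (cp * φ i x - νp)) ∂P < ⊤)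
    (hintm : ∀ i, ∃ cm > (0 : ℝ), ∃ νm : ℝ, ∫⁻ x, erealPos (legT a b f (-cm * φ i x - νm)) ∂P < ⊤) :
    ∀ η : ℝ, 0 < η → ∃ Mm Mp : Fin k → ℝ,
      ∀ (Q : Measure Ω), IsProbabilityMeasure Q → fDivg a b f Q P ≤ (η : EReal) →
        ∀ i, ∫ x, φ i x ∂Q ∈ Icc (-(Mm i)) (Mp i) := by
  intro η hη
  classical
  -- interior points u₀ < 1 < v₀
  obtain ⟨u', hu1, hu2⟩ := exists_between ha1
  obtain ⟨v', hv1, hv2⟩ := exists_between hb1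
  have hu'bot : u' ≠ ⊥ := ne_bot_of_gt hu1
  have hu'top : u' ≠ ⊤ := ne_top_of_lt hu2
  have hv'bot : v' ≠ ⊥ := ne_bot_of_gt hv1
  have hv'top : v' ≠ ⊤ := ne_top_of_lt hv2
  set u₀ := u'.toReal with hu₀def
  set v₀ := v'.toReal with hv₀def
  have hu₀ : ((u₀ : ℝ) : EReal) = u' := EReal.coe_toReal hu'top hu'bot
  have hv₀ : ((v₀ : ℝ) : EReal) = v' := EReal.coe_toReal hv'top hv'bot
  have hu₀s : u₀ ∈ {t : ℝ | a < (t : EReal) ∧ (t : EReal) < b} :=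
    ⟨by rw [hu₀]; exact hu1, by rw [hu₀]; exact hu2.trans hb1⟩
  have hv₀s : v₀ ∈ {t : ℝ | a < (t : EReal) ∧ (t : EReal) < b} :=
    ⟨by rw [hv₀]; exact ha1.trans hv1, by rw [hv₀]; exact hv2⟩
  have hu₀1 : u₀ < 1 := by
    have : ((u₀ : ℝ) : EReal) < ((1 : ℝ) : EReal) := by rw [hu₀]; exact_mod_cast hu2
    exact_mod_cast this
  have hv₀1 : 1 < v₀ := by
    have : ((1 : ℝ) : EReal) < ((v₀ : ℝ) : EReal) := by rw [hv₀]; exact_mod_cast hv1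
    exact_mod_cast this
  -- affine lower bound on f
  set C : ℝ := max |(f 1 - f u₀) / (1 - u₀)| |(f v₀ - f 1) / (v₀ - 1)| with hCdef
  have hC0 : 0 ≤ C := le_trans (abs_nonneg _) (le_max_left _ _)
  have hline : ∀ t : ℝ, a < (t : EReal) → (t : EReal) < b → -C * (t + 1) ≤ f t := by
    intro t h1 h2
    have ht0 : 0 ≤ t := by
      have : ((0 : ℝ) : EReal) < (t : EReal) := lt_of_le_of_lt (by exact_mod_cast ha) h1
      exact le_of_lt (by exact_mod_cast this)
    have hts : t ∈ {t : ℝ | a < (t : EReal) ∧ (t : EReal) < b} := ⟨h1, h2⟩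
    rcases lt_trichotomy t 1 with h | h | h
    · have hsl := hf.slope_mono_adjacent hts hv₀s h hv₀1
      have h1t : (0 : ℝ) < 1 - t := by linarith
      have hvt : (0 : ℝ) < v₀ - 1 := by linarith
      rw [div_le_div_iff₀ h1t hvt] at hsl
      have hsrC : (f v₀ - f 1) / (v₀ - 1) ≤ C := le_trans (le_abs_self _) (le_max_right _ _)
      rw [div_le_iff₀ hvt] at hsrC
      nlinarith [mul_nonneg hC0 ht0]
    · rw [h, hf1]; nlinarith
    · have hsl := hf.slope_mono_adjacent hu₀s hts hu₀1 h
      have h1t : (0 : ℝ) < t - 1 := by linarith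
      have hut : (0 : ℝ) < 1 - u₀ := by linarith
      rw [div_le_div_iff₀ hut h1t] at hsl
      have hsrC : -C ≤ (f 1 - f u₀) / (1 - u₀) :=
        le_trans (neg_le_neg (le_max_left _ _)) (neg_abs_le _)
      rw [le_div_iff₀ hut] at hsrC
      nlinarith [mul_nonneg hC0 ht0]
  have hfl : ∀ ρ : ℝ, ((-C * (ρ + 1) : ℝ) : EReal) ≤ fExt a b f ρ := fun ρ =>
    coe_le_fExt ha1 hb1 (by continuity) hline ρ
  have hfbot : ∀ ρ : ℝ, fExt a b f ρ ≠ ⊥ := fun ρ h =>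
    (EReal.coe_ne_bot _) (le_bot_iff.mp (h ▸ hfl ρ))
  have hfExtm : Measurable (fExt a b f) := measurable_fExt ha ha1 hb1 hf
  -- choose the constants
  choose cp hcp νp hIp using hintp
  choose cm hcm νm hIm using hintm
  set Bp : Fin k → ℝ≥0∞ := fun i =>
    (ENNReal.ofReal (η + 2 * C) + ENNReal.ofReal |νp i| +
      ∫⁻ x, erealPos (legT a b f (cp i * φ i x - νp i)) ∂P) / ENNReal.ofReal (cp i) with hBpdef
  set Bm : Fin k → ℝ≥0∞ := fun i =>
    (ENNReal.ofReal (η + 2 * C) + ENNReal.ofReal |νm i| +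
      ∫⁻ x, erealPos (legT a b f (-cm i * φ i x - νm i)) ∂P) / ENNReal.ofReal (cm i) with hBmdef
  have hBpt : ∀ i, Bp i ≠ ⊤ := by
    intro i
    refine (ENNReal.div_lt_top ?_ (by simp [hcp i])).ne
    exact ENNReal.add_ne_top.mpr ⟨ENNReal.add_ne_top.mpr ⟨ENNReal.ofReal_ne_top,
      ENNReal.ofReal_ne_top⟩, (hIp i).ne⟩
  have hBmt : ∀ i, Bm i ≠ ⊤ := by
    intro i
    refine (ENNReal.div_lt_top ?_ (by simp [hcm i])).ne
    exact ENNReal.add_ne_top.mpr ⟨ENNReal.add_ne_top.mpr ⟨ENNReal.ofReal_ne_top,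
      ENNReal.ofReal_ne_top⟩, (hIm i).ne⟩
  refine ⟨fun i => (Bm i).toReal, fun i => (Bp i).toReal, ?_⟩
  intro Q hQprob hQη
  -- absolute continuity
  have hac : Q ≪ P := by
    by_contra hnac
    rw [fDivg, if_neg hnac] at hQη
    exact absurd hQη (by simp)
  -- density facts
  have hρ'm : Measurable (Q.rnDeriv P) := Measure.measurable_rnDeriv Q P
  have hρm : Measurable (fun x => ((Q.rnDeriv P) x).toReal) := hρ'm.ennreal_toReal
  have hρ0 : ∀ x, (0 : ℝ) ≤ ((Q.rnDeriv P) x).toReal := fun x => ENNReal.toReal_nonneg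
  have hρ'ae : ∀ᵐ x ∂P, (Q.rnDeriv P) x ≠ ⊤ := Q.rnDeriv_ne_top P
  have h_intrho' : ∫⁻ x, (Q.rnDeriv P) x ∂P = 1 := by
    rw [Measure.lintegral_rnDeriv hac]; exact measure_univ
  have h_intrho : ∫⁻ x, ENNReal.ofReal ((Q.rnDeriv P) x).toReal ∂P = 1 := by
    rw [← h_intrho']
    apply lintegral_congr_ae
    filter_upwards [hρ'ae] with x hx
    rw [ENNReal.ofReal_toReal hx]
  -- bound on the negative part of fExt ∘ ρ
  have hB : ∫⁻ x, erealPos (-(fExt a b f ((Q.rnDeriv P) x).toReal)) ∂P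
      ≤ ENNReal.ofReal (2 * C) := by
    have hpt : ∀ x : Ω, erealPos (-(fExt a b f ((Q.rnDeriv P) x).toReal))
        ≤ ENNReal.ofReal (C * (((Q.rnDeriv P) x).toReal + 1)) := by
      intro x
      have h1 : -(fExt a b f ((Q.rnDeriv P) x).toReal)
          ≤ ((C * (((Q.rnDeriv P) x).toReal + 1) : ℝ) : EReal) := by
        have := hfl ((Q.rnDeriv P) x).toReal
        rw [EReal.neg_le]
        rw [show (-(C * (((Q.rnDeriv P) x).toReal + 1) : ℝ) : EReal)
            = ((-C * (((Q.rnDeriv P) x).toReal + 1) : ℝ) : EReal) by rw [← EReal.coe_neg]; ring_nf]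
        exact this
      calc erealPos (-(fExt a b f ((Q.rnDeriv P) x).toReal))
          ≤ erealPos ((C * (((Q.rnDeriv P) x).toReal + 1) : ℝ) : EReal) := erealPos_mono h1
        _ = ENNReal.ofReal (C * (((Q.rnDeriv P) x).toReal + 1)) := erealPos_coe _
    calc ∫⁻ x, erealPos (-(fExt a b f ((Q.rnDeriv P) x).toReal)) ∂P
        ≤ ∫⁻ x, ENNReal.ofReal (C * (((Q.rnDeriv P) x).toReal + 1)) ∂P := lintegral_mono hpt
      _ = ∫⁻ x, ENNReal.ofReal C * ENNReal.ofReal (((Q.rnDeriv P) x).toReal + 1) ∂P := by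
          apply lintegral_congr; intro x; rw [ENNReal.ofReal_mul hC0]
      _ = ENNReal.ofReal C * ∫⁻ x, ENNReal.ofReal (((Q.rnDeriv P) x).toReal + 1) ∂P := by
          rw [lintegral_const_mul _ ((hρm.add_const 1).ennreal_ofReal)]
      _ = ENNReal.ofReal C * ∫⁻ x, (ENNReal.ofReal ((Q.rnDeriv P) x).toReal + 1) ∂P := by
          congr 1; apply lintegral_congr; intro x
          rw [ENNReal.ofReal_add (hρ0 x) zero_le_one, ENNReal.ofReal_one]
      _ = ENNReal.ofReal C * 2 := by
          rw [lintegral_add_right _ measurable_const, h_intrho, lintegral_one, measure_univ]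
          norm_num
      _ = ENNReal.ofReal (2 * C) := by
          rw [mul_comm (2 : ℝ) C, ENNReal.ofReal_mul hC0, ENNReal.ofReal_ofNat, mul_comm]
  -- bound on the positive part of fExt ∘ ρ
  have hA : ∫⁻ x, erealPos (fExt a b f ((Q.rnDeriv P) x).toReal) ∂P
      ≤ ENNReal.ofReal (η + 2 * C) := by
    rw [fDivg, if_pos hac, feexp] at hQη
    by_cases hAt : ∫⁻ x, erealPos (fExt a b f ((Q.rnDeriv P) x).toReal) ∂P = ⊤
    · rw [if_pos hAt] at hQη
      exact absurd hQη (by simp)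
    · rw [if_neg hAt] at hQη
      have hBt : (∫⁻ x, erealPos (-(fExt a b f ((Q.rnDeriv P) x).toReal)) ∂P) ≠ ⊤ :=
        (lt_of_le_of_lt hB ENNReal.ofReal_lt_top).ne
      rw [show ((∫⁻ x, erealPos (-(fExt a b f ((Q.rnDeriv P) x).toReal)) ∂P : ℝ≥0∞) : EReal)
          = (((∫⁻ x, erealPos (-(fExt a b f ((Q.rnDeriv P) x).toReal)) ∂P).toReal : ℝ) : EReal) by
        conv_lhs => rw [← ENNReal.ofReal_toReal hBt]
        rw [EReal.coe_ennreal_ofReal, max_eq_left ENNReal.toReal_nonneg]] at hQη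
      rw [← EReal.coe_sub, EReal.coe_le_coe_iff] at hQη
      have hBr : (∫⁻ x, erealPos (-(fExt a b f ((Q.rnDeriv P) x).toReal)) ∂P).toReal ≤ 2 * C := by
        have h2 := ENNReal.toReal_mono ENNReal.ofReal_ne_top hB
        rwa [ENNReal.toReal_ofReal (by positivity)] at h2
      have hAr : (∫⁻ x, erealPos (fExt a b f ((Q.rnDeriv P) x).toReal) ∂P).toReal ≤ η + 2 * C := by
        linarith
      calc ∫⁻ x, erealPos (fExt a b f ((Q.rnDeriv P) x).toReal) ∂P
          = ENNReal.ofReal (∫⁻ x, erealPos (fExt a b f ((Q.rnDeriv P) x).toReal) ∂P).toReal :=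
            (ENNReal.ofReal_toReal hAt).symm
        _ ≤ ENNReal.ofReal (η + 2 * C) := ENNReal.ofReal_le_ofReal hAr
  -- the key uniform bound
  have key : ∀ (g : Ω → ℝ), Measurable g → ∀ c ν : ℝ, 0 < c →
      ∫⁻ x, ENNReal.ofReal (max (g x) 0) ∂Q ≤
        (ENNReal.ofReal (η + 2 * C) + ENNReal.ofReal |ν| +
          ∫⁻ x, erealPos (legT a b f (c * g x - ν)) ∂P) / ENNReal.ofReal c := by
    intro g hgm c ν hc
    have hpt : ∀ x, ENNReal.ofReal (((Q.rnDeriv P) x).toReal * (c * max (g x) 0)) ≤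
        erealPos (fExt a b f ((Q.rnDeriv P) x).toReal) +
        ENNReal.ofReal (((Q.rnDeriv P) x).toReal * |ν|) +
        erealPos (legT a b f (c * g x - ν)) := by
      intro x
      rcases le_or_gt (g x) 0 with hg0 | hg0
      · rw [max_eq_right hg0, mul_zero, mul_zero, ENNReal.ofReal_zero]
        exact zero_le
      · rw [max_eq_left hg0.le]
        have hsplit : ((Q.rnDeriv P) x).toReal * (c * g x)
            = ((Q.rnDeriv P) x).toReal * (c * g x - ν) + ((Q.rnDeriv P) x).toReal * ν := by ring
        have h2 : ENNReal.ofReal (((Q.rnDeriv P) x).toReal * ν)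
            ≤ ENNReal.ofReal (((Q.rnDeriv P) x).toReal * |ν|) :=
          ENNReal.ofReal_le_ofReal (mul_le_mul_of_nonneg_left (le_abs_self ν) (hρ0 x))
        have hy : ((((Q.rnDeriv P) x).toReal * (c * g x - ν) : ℝ) : EReal)
            ≤ fExt a b f ((Q.rnDeriv P) x).toReal + legT a b f (c * g x - ν) :=
          young ha1 hb1 hf1 hline _ _
        have h1 : ENNReal.ofReal (((Q.rnDeriv P) x).toReal * (c * g x - ν))
            ≤ erealPos (fExt a b f ((Q.rnDeriv P) x).toReal) +
              erealPos (legT a b f (c * g x - ν)) :=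
          ofReal_le_erealPos_add hy (hfbot _) (legT_ne_bot ha1 hb1 hf1 _)
        calc ENNReal.ofReal (((Q.rnDeriv P) x).toReal * (c * g x))
            ≤ ENNReal.ofReal (((Q.rnDeriv P) x).toReal * (c * g x - ν)) +
              ENNReal.ofReal (((Q.rnDeriv P) x).toReal * ν) := by
              rw [hsplit]; exact ENNReal.ofReal_add_le
          _ ≤ (erealPos (fExt a b f ((Q.rnDeriv P) x).toReal) +
              erealPos (legT a b f (c * g x - ν))) +
              ENNReal.ofReal (((Q.rnDeriv P) x).toReal * |ν|) := add_le_add h1 h2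
          _ = erealPos (fExt a b f ((Q.rnDeriv P) x).toReal) +
              ENNReal.ofReal (((Q.rnDeriv P) x).toReal * |ν|) +
              erealPos (legT a b f (c * g x - ν)) := by ring
    -- measurable pieces
    have hum : Measurable (fun x => erealPos (fExt a b f ((Q.rnDeriv P) x).toReal)) :=
      measurable_erealPos.comp (hfExtm.comp hρm)
    have hwm : Measurable (fun x => ENNReal.ofReal (((Q.rnDeriv P) x).toReal * |ν|)) :=
      (hρm.mul_const _).ennreal_ofReal
    have hw_int : ∫⁻ x, ENNReal.ofReal (((Q.rnDeriv P) x).toReal * |ν|) ∂P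
        = ENNReal.ofReal |ν| := by
      calc ∫⁻ x, ENNReal.ofReal (((Q.rnDeriv P) x).toReal * |ν|) ∂P
          = ∫⁻ x, ENNReal.ofReal (((Q.rnDeriv P) x).toReal) * ENNReal.ofReal |ν| ∂P := by
            apply lintegral_congr; intro x; rw [ENNReal.ofReal_mul (hρ0 x)]
        _ = (∫⁻ x, ENNReal.ofReal (((Q.rnDeriv P) x).toReal) ∂P) * ENNReal.ofReal |ν| := by
            rw [lintegral_mul_const _ hρm.ennreal_ofReal]
        _ = ENNReal.ofReal |ν| := by rw [h_intrho, one_mul]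
    have hint : ∫⁻ x, ENNReal.ofReal (((Q.rnDeriv P) x).toReal * (c * max (g x) 0)) ∂P ≤
        ENNReal.ofReal (η + 2 * C) + ENNReal.ofReal |ν| +
          ∫⁻ x, erealPos (legT a b f (c * g x - ν)) ∂P := by
      calc ∫⁻ x, ENNReal.ofReal (((Q.rnDeriv P) x).toReal * (c * max (g x) 0)) ∂P
          ≤ ∫⁻ x, (erealPos (fExt a b f ((Q.rnDeriv P) x).toReal) +
              ENNReal.ofReal (((Q.rnDeriv P) x).toReal * |ν|) +
              erealPos (legT a b f (c * g x - ν))) ∂P := lintegral_mono hpt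
        _ = (∫⁻ x, (erealPos (fExt a b f ((Q.rnDeriv P) x).toReal) +
              ENNReal.ofReal (((Q.rnDeriv P) x).toReal * |ν|)) ∂P) +
              ∫⁻ x, erealPos (legT a b f (c * g x - ν)) ∂P :=
            lintegral_add_left (hum.add hwm) _
        _ = (∫⁻ x, erealPos (fExt a b f ((Q.rnDeriv P) x).toReal) ∂P) +
              (∫⁻ x, ENNReal.ofReal (((Q.rnDeriv P) x).toReal * |ν|) ∂P) +
              ∫⁻ x, erealPos (legT a b f (c * g x - ν)) ∂P := by
            rw [lintegral_add_left hum]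
        _ ≤ ENNReal.ofReal (η + 2 * C) + ENNReal.ofReal |ν| +
              ∫⁻ x, erealPos (legT a b f (c * g x - ν)) ∂P := by
            rw [hw_int]
            exact add_le_add (add_le_add hA le_rfl) le_rfl
    have hQint : ∫⁻ x, ENNReal.ofReal (c * max (g x) 0) ∂Q
        = ∫⁻ x, ENNReal.ofReal (((Q.rnDeriv P) x).toReal * (c * max (g x) 0)) ∂P := by
      conv_lhs => rw [← Measure.withDensity_rnDeriv_eq Q P hac]
      rw [lintegral_withDensity_eq_lintegral_mul P hρ'm
        (((hgm.max measurable_const).const_mul c).ennreal_ofReal)]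
      apply lintegral_congr_ae
      filter_upwards [hρ'ae] with x hx
      simp only [Pi.mul_apply]
      rw [ENNReal.ofReal_mul (hρ0 x), ENNReal.ofReal_toReal hx]
    have hcmul : ∫⁻ x, ENNReal.ofReal (c * max (g x) 0) ∂Q
        = ENNReal.ofReal c * ∫⁻ x, ENNReal.ofReal (max (g x) 0) ∂Q := by
      rw [← lintegral_const_mul _ ((hgm.max measurable_const).ennreal_ofReal)]
      apply lintegral_congr; intro x
      rw [ENNReal.ofReal_mul hc.le]
    rw [ENNReal.le_div_iff_mul_le (Or.inl (by simp [hc])) (Or.inl ENNReal.ofReal_ne_top)]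
    rw [mul_comm, ← hcmul, hQint]
    exact hint
  intro i
  -- apply the key bound to φ i and -φ i
  have hPp : ∫⁻ x, ENNReal.ofReal (max (φ i x) 0) ∂Q ≤ Bp i :=
    key (φ i) (hφm i) (cp i) (νp i) (hcp i)
  have hPm : ∫⁻ x, ENNReal.ofReal (max (-(φ i x)) 0) ∂Q ≤ Bm i := by
    have h := key (fun x => -(φ i x)) (hφm i).neg (cm i) (νm i) (hcm i)
    simp only [mul_neg, neg_mul] at h ⊢
    convert h using 3 <;> ring_nf
  -- integrability of φ i with respect to Q
  have habs : ∀ x, ENNReal.ofReal ‖φ i x‖ ≤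
      ENNReal.ofReal (max (φ i x) 0) + ENNReal.ofReal (max (-(φ i x)) 0) := by
    intro x
    rcases le_total 0 (φ i x) with h | h
    · rw [Real.norm_eq_abs, abs_of_nonneg h]
      exact le_add_of_le_of_nonneg (ENNReal.ofReal_le_ofReal (le_max_left _ _)) zero_le
    · rw [Real.norm_eq_abs, abs_of_nonpos h]
      exact le_add_of_nonneg_of_le zero_le (ENNReal.ofReal_le_ofReal (le_max_left _ _))
  have hQint : Integrable (φ i) Q := by
    refine ⟨(hφm i).aestronglyMeasurable, ?_⟩
    rw [hasFiniteIntegral_iff_norm]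
    calc ∫⁻ x, ENNReal.ofReal ‖φ i x‖ ∂Q
        ≤ ∫⁻ x, (ENNReal.ofReal (max (φ i x) 0) + ENNReal.ofReal (max (-(φ i x)) 0)) ∂Q :=
          lintegral_mono habs
      _ = (∫⁻ x, ENNReal.ofReal (max (φ i x) 0) ∂Q) +
            ∫⁻ x, ENNReal.ofReal (max (-(φ i x)) 0) ∂Q :=
          lintegral_add_left ((hφm i).max measurable_const).ennreal_ofReal _
      _ ≤ Bp i + Bm i := add_le_add hPp hPm
      _ < ⊤ := by
          rw [ENNReal.add_lt_top]
          exact ⟨(hBpt i).lt_top, (hBmt i).lt_top⟩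
  -- conclude
  rw [integral_eq_lintegral_pos_part_sub_lintegral_neg_part hQint]
  have e1 : ∫⁻ x, ENNReal.ofReal (φ i x) ∂Q = ∫⁻ x, ENNReal.ofReal (max (φ i x) 0) ∂Q := by
    apply lintegral_congr; intro x
    rcases le_total 0 (φ i x) with h | h
    · rw [max_eq_left h]
    · rw [max_eq_right h, ENNReal.ofReal_eq_zero.mpr h, ENNReal.ofReal_zero]
  have e2 : ∫⁻ x, ENNReal.ofReal (-(φ i x)) ∂Q
      = ∫⁻ x, ENNReal.ofReal (max (-(φ i x)) 0) ∂Q := by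
    apply lintegral_congr; intro x
    rcases le_total 0 (-(φ i x)) with h | h
    · rw [max_eq_left h]
    · rw [max_eq_right h, ENNReal.ofReal_eq_zero.mpr h, ENNReal.ofReal_zero]
  rw [e1, e2]
  have t1 : (∫⁻ x, ENNReal.ofReal (max (φ i x) 0) ∂Q).toReal ≤ (Bp i).toReal :=
    ENNReal.toReal_mono (hBpt i) hPp
  have t2 : (∫⁻ x, ENNReal.ofReal (max (-(φ i x)) 0) ∂Q).toReal ≤ (Bm i).toReal :=
    ENNReal.toReal_mono (hBmt i) hPm
  have n1 : (0 : ℝ) ≤ (∫⁻ x, ENNReal.ofReal (max (φ i x) 0) ∂Q).toReal := ENNReal.toReal_nonneg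
  have n2 : (0 : ℝ) ≤ (∫⁻ x, ENNReal.ofReal (max (-(φ i x)) 0) ∂Q).toReal := ENNReal.toReal_nonneg
  constructor
  · linarith
  · linarith
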